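/- Let d be a positive integer, λ > 0 a real number, and M a d×d real symmetric positive semidefinite matrix; set Ω = λI + M. Let U be a nonnegative integer and ψ₁, …, ψ_U ∈ ℝ^d with ‖ψ_i‖ ≤ 1 for all i; set Λ = Σ_{i=1}^{U} ψ_i ψ_iᵀ and Σ = Ω + Λ. Then Ω and Σ are invertible and (1 + U/λ)·Σ⁻¹ − Ω⁻¹ is positive semidefinite; that is, (1 + U/λ)Σ⁻¹ ⪰ Ω⁻¹ in the Loewner order. -/

import Mathlib

open Matrix Finset


variable {n : Type*} [Fintype n] [DecidableEq n]
open scoped MatrixOrder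

lemma psd_smul {c : ℝ} (hc : 0 ≤ c) {A : Matrix n n ℝ} (hA : A.PosSemidef) :
    (c • A).PosSemidef := by
  refine ⟨?_, fun x => ?_⟩
  · show (c • A)ᴴ = c • A
    rw [Matrix.conjTranspose_smul, star_trivial, hA.1]
  · exact (hA.smul hc).2 x

lemma pd_conj {A B : Matrix n n ℝ} (hA : A.PosDef) (hB : IsUnit B.det) :
    (Bᴴ * A * B).PosDef := by
  refine posDef_iff_dotProduct_mulVec.mpr ⟨isHermitian_conjTranspose_mul_mul B hA.1, fun x hx => ?_⟩
  have hBx : B *ᵥ x ≠ 0 := by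
    intro h
    apply hx
    have := congrArg (fun y => B⁻¹ *ᵥ y) h
    simpa [mulVec_mulVec, Matrix.nonsing_inv_mul B hB] using this
  simpa only [star_mulVec, dotProduct_mulVec, vecMul_vecMul] using hA.dotProduct_mulVec_pos hBx

/-- If `X ⪰ 1` and `X` is PD then `1 ⪰ X⁻¹`. -/
lemma one_sub_inv_psd {X : Matrix n n ℝ} (hX : X.PosDef)
    (h1 : (X - 1).PosSemidef) : ((1 : Matrix n n ℝ) - X⁻¹).PosSemidef := by
  have hXi : X⁻¹.PosDef := hX.inv
  set S := CFC.sqrt X⁻¹ with hS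
  have hSS : S * S = X⁻¹ := CFC.sqrt_mul_sqrt_self X⁻¹ hXi.posSemidef.nonneg
  have hSherm : Sᴴ = S := (Matrix.nonneg_iff_posSemidef.mp (CFC.sqrt_nonneg X⁻¹)).1
  have hXdet : IsUnit X.det := Matrix.isUnit_iff_isUnit_det X |>.mp hX.isUnit
  have hSdet : IsUnit S.det := by
    have : S.det * S.det = X⁻¹.det := by rw [← det_mul, hSS]
    have hpos : 0 < X⁻¹.det := hXi.det_pos
    rw [isUnit_iff_ne_zero]
    intro h
    rw [h, mul_zero] at this
    exact hpos.ne' this.symm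
  have hXeq : X = S⁻¹ * S⁻¹ := by
    rw [← Matrix.mul_inv_rev, hSS, Matrix.nonsing_inv_nonsing_inv X hXdet]
  have hSXS : S * X * S = 1 := by
    rw [hXeq]
    calc S * (S⁻¹ * S⁻¹) * S = (S * S⁻¹) * (S⁻¹ * S) := by
          simp only [Matrix.mul_assoc]
      _ = 1 := by
          rw [Matrix.mul_nonsing_inv S hSdet, Matrix.nonsing_inv_mul S hSdet, Matrix.one_mul]
  have key : (1 : Matrix n n ℝ) - X⁻¹ = S * (X - 1) * S := by
    rw [Matrix.mul_sub, Matrix.mul_one, Matrix.sub_mul, hSXS, hSS]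
  rw [key]
  have := h1.mul_mul_conjTranspose_same S
  rwa [hSherm] at this

/-- Antitonicity of inverse: if `A ⪯ B` with `A, B` PD, then `B⁻¹ ⪯ A⁻¹`. -/
lemma inv_sub_inv_psd {A B : Matrix n n ℝ} (hA : A.PosDef) (hB : B.PosDef)
    (hAB : (B - A).PosSemidef) : (A⁻¹ - B⁻¹).PosSemidef := by
  have hAi : A⁻¹.PosDef := hA.inv
  set T := CFC.sqrt A⁻¹ with hT
  have hTT : T * T = A⁻¹ := CFC.sqrt_mul_sqrt_self A⁻¹ hAi.posSemidef.nonneg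
  have hTherm : Tᴴ = T := (Matrix.nonneg_iff_posSemidef.mp (CFC.sqrt_nonneg A⁻¹)).1
  have hAdet : IsUnit A.det := Matrix.isUnit_iff_isUnit_det A |>.mp hA.isUnit
  have hBdet : IsUnit B.det := Matrix.isUnit_iff_isUnit_det B |>.mp hB.isUnit
  have hTdet : IsUnit T.det := by
    have : T.det * T.det = A⁻¹.det := by rw [← det_mul, hTT]
    have hpos : 0 < A⁻¹.det := hAi.det_pos
    rw [isUnit_iff_ne_zero]
    intro h
    rw [h, mul_zero] at this
    exact hpos.ne' this.symm
  set X := T * B * T with hXdef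
  have hXpd : X.PosDef := by
    have := pd_conj hB hTdet
    rwa [hTherm] at this
  have hX1 : (X - 1).PosSemidef := by
    have key : X - 1 = T * (B - A) * T := by
      have hTAT : T * A * T = 1 := by
        have hAeq : A = T⁻¹ * T⁻¹ := by
          rw [← Matrix.mul_inv_rev, hTT, Matrix.nonsing_inv_nonsing_inv A hAdet]
        rw [hAeq]
        calc T * (T⁻¹ * T⁻¹) * T = (T * T⁻¹) * (T⁻¹ * T) := by
              simp only [Matrix.mul_assoc]
          _ = 1 := by
              rw [Matrix.mul_nonsing_inv T hTdet, Matrix.nonsing_inv_mul T hTdet, Matrix.one_mul]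
      rw [Matrix.mul_sub, Matrix.sub_mul, hTAT, hXdef]
    rw [key]
    have := hAB.mul_mul_conjTranspose_same T
    rwa [hTherm] at this
  have h1X : ((1 : Matrix n n ℝ) - X⁻¹).PosSemidef := one_sub_inv_psd hXpd hX1
  have hTXT : T * X⁻¹ * T = B⁻¹ := by
    rw [hXdef, Matrix.mul_inv_rev, Matrix.mul_inv_rev, ← Matrix.mul_assoc, ← Matrix.mul_assoc,
      Matrix.mul_nonsing_inv T hTdet, Matrix.one_mul, Matrix.mul_assoc,
      Matrix.nonsing_inv_mul T hTdet, Matrix.mul_one]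
  have key : A⁻¹ - B⁻¹ = T * (1 - X⁻¹) * T := by
    rw [Matrix.mul_sub, Matrix.mul_one, Matrix.sub_mul, hTT, hTXT]
  rw [key]
  have := h1X.mul_mul_conjTranspose_same T
  rwa [hTherm] at this

lemma pd_smul {c : ℝ} (hc : 0 < c) {A : Matrix n n ℝ} (hA : A.PosDef) :
    (c • A).PosDef := by
  refine ⟨?_, fun x hx => ?_⟩
  · show (c • A)ᴴ = c • A
    rw [Matrix.conjTranspose_smul, star_trivial, hA.1]
  · exact (hA.smul hc).2 hx

lemma quad_vecMulVec (w x : n → ℝ) :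
    x ⬝ᵥ (vecMulVec w w *ᵥ x) = (w ⬝ᵥ x) ^ 2 := by
  simp only [mulVec, dotProduct, vecMulVec, of_apply, Finset.mul_sum]
  rw [sq, Finset.sum_mul_sum]
  exact Finset.sum_congr rfl fun i _ => Finset.sum_congr rfl fun j _ => by ring

lemma psd_vecMulVec (w : n → ℝ) : (vecMulVec w w).PosSemidef := by
  have h := posSemidef_vecMulVec_self_star w
  rwa [star_trivial] at h


/-- Lemma D.16 of the paper: with `Ω = λI + M` (M PSD), `Λ = Σ ψᵢψᵢᵀ` built from
`U` unit-norm vectors, and `Σ = Ω + Λ`, both `Ω` and `Σ` are invertible and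
`(1 + U/λ) Σ⁻¹ ⪰ Ω⁻¹` in the Loewner order. -/
theorem delayed_vs_full_design_inverse_loewner
    (d : ℕ) (hd : 0 < d) (lam : ℝ) (hlam : 0 < lam)
    (M : Matrix (Fin d) (Fin d) ℝ) (hM : M.PosSemidef)
    (U : ℕ) (ψ : Fin U → EuclideanSpace ℝ (Fin d)) (hψ : ∀ i, ‖ψ i‖ ≤ 1) :
    let Ω : Matrix (Fin d) (Fin d) ℝ := lam • (1 : Matrix (Fin d) (Fin d) ℝ) + M
    let Lam : Matrix (Fin d) (Fin d) ℝ := ∑ i, vecMulVec (ψ i) (ψ i)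
    let Sig : Matrix (Fin d) (Fin d) ℝ := Ω + Lam
    IsUnit Ω ∧ IsUnit Sig ∧
      ((1 + (U : ℝ) / lam) • Sig⁻¹ - Ω⁻¹).PosSemidef := by
  intro Ω Lam Sig
  have hΩdef : Ω = lam • (1 : Matrix (Fin d) (Fin d) ℝ) + M := rfl
  have hLamdef : Lam = ∑ i, vecMulVec (ψ i) (ψ i) := rfl
  have hSigdef : Sig = Ω + Lam := rfl
  -- Ω is positive definite
  have hlam1 : (lam • (1 : Matrix (Fin d) (Fin d) ℝ)).PosDef := by
    rw [Matrix.smul_one_eq_diagonal]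
    exact Matrix.posDef_diagonal_iff.mpr fun _ => hlam
  have hΩpd : Ω.PosDef := hlam1.add_posSemidef hM
  -- Λ is positive semidefinite
  have hLampsd : Lam.PosSemidef := by
    rw [hLamdef]
    refine Finset.sum_induction _ _ (fun a b ha hb => ha.add hb) Matrix.PosSemidef.zero ?_
    exact fun i _ => psd_vecMulVec (ψ i)
  have hSigpd : Sig.PosDef := hΩpd.add_posSemidef hLampsd
  set c : ℝ := 1 + (U : ℝ) / lam with hc
  have hUlam : 0 ≤ (U : ℝ) / lam := div_nonneg (Nat.cast_nonneg U) hlam.le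
  have hcpos : 0 < c := by positivity
  -- U • 1 - Λ is PSD
  have hU1 : (((U : ℝ)) • (1 : Matrix (Fin d) (Fin d) ℝ) - Lam).PosSemidef := by
    refine posSemidef_iff_dotProduct_mulVec.mpr ⟨?_, ?_⟩
    · show _ᴴ = _
      rw [Matrix.conjTranspose_sub, Matrix.conjTranspose_smul, star_trivial,
        Matrix.conjTranspose_one, hLampsd.1]
    · intro x
      have hx : star x = x := star_trivial x
      rw [Matrix.sub_mulVec, dotProduct_sub, hx]
      have hone : x ⬝ᵥ ((U : ℝ) • (1 : Matrix (Fin d) (Fin d) ℝ)) *ᵥ x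
          = (U : ℝ) * (x ⬝ᵥ x) := by
        rw [Matrix.smul_mulVec, Matrix.one_mulVec, dotProduct_smul, smul_eq_mul]
      have hquad : x ⬝ᵥ Lam *ᵥ x = ∑ i, ((ψ i : Fin d → ℝ) ⬝ᵥ x) ^ 2 := by
        have hsum : (∑ i, vecMulVec ((ψ i : Fin d → ℝ)) ((ψ i : Fin d → ℝ))) *ᵥ x
            = ∑ i, (vecMulVec ((ψ i : Fin d → ℝ)) ((ψ i : Fin d → ℝ))) *ᵥ x := by
          ext j
          simp only [mulVec, dotProduct, Finset.sum_apply, Matrix.sum_apply, Finset.sum_mul]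
          exact Finset.sum_comm
        have hdot : x ⬝ᵥ (∑ i, (vecMulVec ((ψ i : Fin d → ℝ)) ((ψ i : Fin d → ℝ))) *ᵥ x)
            = ∑ i, x ⬝ᵥ ((vecMulVec ((ψ i : Fin d → ℝ)) ((ψ i : Fin d → ℝ))) *ᵥ x) := by
          simp only [dotProduct, Finset.sum_apply, Finset.mul_sum]
          exact Finset.sum_comm
        rw [hLamdef, hsum, hdot]
        exact Finset.sum_congr rfl fun i _ => quad_vecMulVec _ _
      rw [hone, hquad, sub_nonneg]
      have hbound : ∀ i : Fin U, ((ψ i : Fin d → ℝ) ⬝ᵥ x) ^ 2 ≤ x ⬝ᵥ x := by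
        intro i
        have hcs := Finset.sum_mul_sq_le_sq_mul_sq Finset.univ
          (fun j => (ψ i : Fin d → ℝ) j) (fun j => x j)
        have hψψ : ∑ j, ((ψ i : Fin d → ℝ) j) ^ 2 ≤ 1 := by
          have hn : ∑ j, ((ψ i : Fin d → ℝ) j) ^ 2 = ‖ψ i‖ ^ 2 := by
            rw [EuclideanSpace.norm_eq, Real.sq_sqrt (by positivity)]
            exact Finset.sum_congr rfl fun j _ => by
              rw [Real.norm_eq_abs, sq_abs]
          rw [hn]
          have := hψ i
          nlinarith [norm_nonneg (ψ i)]
        have hxx : x ⬝ᵥ x = ∑ j, (x j) ^ 2 := by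
          simp [dotProduct, sq]
        have hxx0 : 0 ≤ ∑ j, (x j) ^ 2 := Finset.sum_nonneg fun j _ => sq_nonneg _
        calc ((ψ i : Fin d → ℝ) ⬝ᵥ x) ^ 2
            = (∑ j, (ψ i : Fin d → ℝ) j * x j) ^ 2 := rfl
          _ ≤ (∑ j, ((ψ i : Fin d → ℝ) j) ^ 2) * ∑ j, (x j) ^ 2 := hcs
          _ ≤ 1 * ∑ j, (x j) ^ 2 := by
              exact mul_le_mul_of_nonneg_right hψψ hxx0
          _ = x ⬝ᵥ x := by rw [one_mul, hxx]
      calc ∑ i, ((ψ i : Fin d → ℝ) ⬝ᵥ x) ^ 2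
          ≤ ∑ _i : Fin U, x ⬝ᵥ x := Finset.sum_le_sum fun i _ => hbound i
        _ = (U : ℝ) * (x ⬝ᵥ x) := by
            rw [Finset.sum_const, Finset.card_univ, Fintype.card_fin, nsmul_eq_mul]
  -- c • Ω - Σ is PSD
  have hkey : (c • Ω - Sig).PosSemidef := by
    have heq : c • Ω - Sig
        = (((U : ℝ)) • (1 : Matrix (Fin d) (Fin d) ℝ) - Lam)
          + ((U : ℝ) / lam) • M := by
      rw [hSigdef, hΩdef, hc]
      have h1 : ((U : ℝ) / lam) • (lam • (1 : Matrix (Fin d) (Fin d) ℝ))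
          = ((U : ℝ)) • (1 : Matrix (Fin d) (Fin d) ℝ) := by
        rw [smul_smul, div_mul_cancel₀ _ hlam.ne']
      rw [add_smul, one_smul, smul_add, h1]
      abel
    rw [heq]
    exact hU1.add (psd_smul hUlam hM)
  -- wrap up
  have hcΩpd : (c • Ω).PosDef := pd_smul hcpos hΩpd
  have hmain : (Sig⁻¹ - (c • Ω)⁻¹).PosSemidef := inv_sub_inv_psd hSigpd hcΩpd hkey
  have hΩdet : IsUnit Ω.det := (Matrix.isUnit_iff_isUnit_det Ω).mp hΩpd.isUnit
  haveI : Invertible c := invertibleOfNonzero hcpos.ne'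
  have hinv : (c • Ω)⁻¹ = c⁻¹ • Ω⁻¹ := by
    apply Matrix.inv_eq_left_inv
    rw [Matrix.smul_mul, Matrix.mul_smul, smul_smul, inv_mul_cancel₀ hcpos.ne', one_smul,
      Matrix.nonsing_inv_mul Ω hΩdet]
  refine ⟨hΩpd.isUnit, hSigpd.isUnit, ?_⟩
  have : c • (Sig⁻¹ - c⁻¹ • Ω⁻¹) = c • Sig⁻¹ - Ω⁻¹ := by
    rw [smul_sub, smul_smul, mul_inv_cancel₀ hcpos.ne', one_smul]
  rw [← this]
  exact psd_smul hcpos.le (hinv ▸ hmain)
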